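/- Let f_0 ⋖ f_1 ⋖ ⋯ ⋖ f_t be a chain in Bound(k,n). Then t = ℓ(f_t) − ℓ(f_0), Cr(f_0) − Cr(f_t) = (ℓ(f_t) − ℓ(f_0)) − (#Fix(f_t) − #Fix(f_0)), and the number of indices 0 ≤ s < t with Cr(f_s) = Cr(f_{s+1}) equals #Fix(f_t) − #Fix(f_0). -/

import Mathlib

/-- A `k`-bounded affine permutation of size `n`: a bijection `f : ℤ → ℤ` with
`f(i+n) = f(i) + n`, `i ≤ f(i) ≤ i + n` for all `i`, and `∑_{i=1}^n (f(i) - i) = n*k`. -/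
structure BoundedAffinePerm (k n : ℕ) where
  toFun : ℤ → ℤ
  bijective : Function.Bijective toFun
  periodic : ∀ i : ℤ, toFun (i + (n : ℤ)) = toFun i + (n : ℤ)
  le_apply : ∀ i : ℤ, i ≤ toFun i
  apply_le : ∀ i : ℤ, toFun i ≤ i + (n : ℤ)
  sum_eq : (∑ i ∈ Finset.Icc (1 : ℤ) (n : ℤ), (toFun i - i)) = (n : ℤ) * (k : ℤ)

namespace BoundedAffinePerm

variable {k n : ℕ}

/-- The length of a bounded affine permutation: the number of pairs `(i,j)` with
`1 ≤ i < j ≤ n` and either `f(i) > f(j)` or `f(i) < f(j) - n` (affine inversions). -/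
noncomputable def length (f : BoundedAffinePerm k n) : ℕ :=
  ((Finset.Icc (1 : ℤ) (n : ℤ) ×ˢ Finset.Icc (1 : ℤ) (n : ℤ)).filter
    (fun p => p.1 < p.2 ∧
      (f.toFun p.2 < f.toFun p.1 ∨ f.toFun p.1 < f.toFun p.2 - (n : ℤ)))).card

/-- The number of fixed points of `f` in `{1, …, n}`. -/
noncomputable def fixCount (f : BoundedAffinePerm k n) : ℕ :=
  ((Finset.Icc (1 : ℤ) (n : ℤ)).filter (fun i => f.toFun i = i)).card

/-- The crossing number of `f`: the number of pairs `(i,j) ∈ {1,…,n} × ℤ` with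
`i < j`, `j < f(i)` and `f(i) < f(j)`. -/
noncomputable def crossings (f : BoundedAffinePerm k n) : ℕ :=
  ∑ i ∈ Finset.Icc (1 : ℤ) (n : ℤ),
    ((Finset.Ioo i (f.toFun i)).filter (fun j => f.toFun i < f.toFun j)).card

end BoundedAffinePerm

/-- The transposition `σ_i` of size `n`. -/
def sigmaT (n : ℕ) (i : ℤ) : ℤ → ℤ := fun m =>
  if m % (n : ℤ) = i % (n : ℤ) then m + 1
  else if m % (n : ℤ) = (i + 1) % (n : ℤ) then m - 1
  else m

/-- The covering relation `f ⋖ g` on `Bound(k,n)`: `ℓ(g) > ℓ(f)` and `g = σ_i ∘ f`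
or `g = f ∘ σ_i` for some transposition `σ_i` of size `n`. -/
def BoundedAffinePerm.Covers {k n : ℕ} (f g : BoundedAffinePerm k n) : Prop :=
  f.length < g.length ∧
    ∃ i : ℤ, g.toFun = sigmaT n i ∘ f.toFun ∨ g.toFun = f.toFun ∘ sigmaT n i


open Finset

section Helpers

variable {n : ℕ}

lemma emod_ne_of_between {a q : ℤ} (h1 : a < q) (h2 : q < a + (n:ℤ)) :
    q % (n:ℤ) ≠ a % (n:ℤ) := by
  intro h
  have hd : (n:ℤ) ∣ (q - a) := Int.dvd_of_emod_eq_zero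
    (Int.emod_eq_emod_iff_emod_sub_eq_zero.mp h)
  have := Int.le_of_dvd (by omega) hd
  omega

lemma emod_congr_add {m i : ℤ} (h : m % (n:ℤ) = i % (n:ℤ)) (c : ℤ) :
    (m + c) % (n:ℤ) = (i + c) % (n:ℤ) := by
  rw [Int.emod_eq_emod_iff_emod_sub_eq_zero] at h ⊢
  have : m + c - (i + c) = m - i := by ring
  rw [this]; exact h

lemma sigmaT_lo {i m : ℤ} (h : m % (n:ℤ) = i % (n:ℤ)) : sigmaT n i m = m + 1 := by
  simp [sigmaT, h]

lemma sigmaT_hi (hn : 2 ≤ n) {i m : ℤ} (h : m % (n:ℤ) = (i+1) % (n:ℤ)) :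
    sigmaT n i m = m - 1 := by
  have h2 : m % (n:ℤ) ≠ i % (n:ℤ) := by
    intro h'
    exact emod_ne_of_between (n := n) (by omega) (by push_cast; omega) (h.symm.trans h')
  rw [sigmaT]; simp only [if_neg h2, if_pos h]

lemma sigmaT_self {i m : ℤ} (h1 : m % (n:ℤ) ≠ i % (n:ℤ))
    (h2 : m % (n:ℤ) ≠ (i+1) % (n:ℤ)) : sigmaT n i m = m := by
  simp [sigmaT, h1, h2]

end Helpers

namespace BoundedAffinePerm

variable {k n : ℕ}

lemma inj (f : BoundedAffinePerm k n) {p q : ℤ} (h : f.toFun p = f.toFun q) : p = q :=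
  f.bijective.injective h

lemma shift (f : BoundedAffinePerm k n) (t : ℤ) (m : ℤ) :
    f.toFun (m + t * n) = f.toFun m + t * n := by
  induction t using Int.induction_on with
  | zero => simp
  | succ j ih =>
    have := f.periodic (m + j * n)
    push_cast at *
    rw [show m + ((j:ℤ) + 1) * n = (m + j * n) + n by ring, this, ih]; ring
  | pred j ih =>
    have := f.periodic (m + (-(j:ℤ) - 1) * n)
    push_cast at *
    have e : m + (-(j:ℤ)) * (n:ℤ) = (m + (-(j:ℤ)-1) * n) + n := by ring
    rw [e, this] at ih
    linear_combination ih

/-- values determine residues -/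
lemma emod_of_emod (f : BoundedAffinePerm k n) (hn : 0 < n) {p q : ℤ}
    (h : f.toFun p % (n:ℤ) = f.toFun q % (n:ℤ)) : p % (n:ℤ) = q % (n:ℤ) := by
  have hd : (n:ℤ) ∣ (f.toFun p - f.toFun q) := Int.dvd_of_emod_eq_zero
    (Int.emod_eq_emod_iff_emod_sub_eq_zero.mp h)
  obtain ⟨t, ht⟩ := hd
  have : f.toFun p = f.toFun (q + t * n) := by rw [f.shift]; linear_combination ht
  have hpq : p = q + t * n := f.inj this
  rw [Int.emod_eq_emod_iff_emod_sub_eq_zero, hpq]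
  simp [Int.add_mul_emod_self_left, Int.sub_emod]

lemma emod_apply (f : BoundedAffinePerm k n) {p q : ℤ} (h : p % (n:ℤ) = q % (n:ℤ)) :
    f.toFun p % (n:ℤ) = f.toFun q % (n:ℤ) := by
  have hd : (n:ℤ) ∣ (p - q) := Int.dvd_of_emod_eq_zero
    (Int.emod_eq_emod_iff_emod_sub_eq_zero.mp h)
  obtain ⟨t, ht⟩ := hd
  have : f.toFun p = f.toFun q + t * n := by
    rw [show p = q + t * n by linear_combination ht, f.shift]
  rw [this, Int.emod_eq_emod_iff_emod_sub_eq_zero]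
  simp [Int.add_mul_emod_self_left]

end BoundedAffinePerm


namespace BoundedAffinePerm

variable {k n : ℕ}

/-- inner inversion count -/
noncomputable def cL (f : BoundedAffinePerm k n) (p : ℤ) : ℕ :=
  ((Finset.Ioo p (p + (n:ℤ))).filter (fun q => f.toFun q < f.toFun p)).card

/-- inner crossing count -/
noncomputable def cC (f : BoundedAffinePerm k n) (p : ℤ) : ℕ :=
  ((Finset.Ioo p (f.toFun p)).filter (fun q => f.toFun p < f.toFun q)).card

noncomputable def Lval (f : BoundedAffinePerm k n) : ℕ := ∑ p ∈ Finset.Icc (1:ℤ) (n:ℤ), f.cL p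

lemma crossings_eq_sum (f : BoundedAffinePerm k n) :
    f.crossings = ∑ p ∈ Finset.Icc (1:ℤ) (n:ℤ), f.cC p := rfl

lemma cL_per (f : BoundedAffinePerm k n) (p : ℤ) : f.cL (p + n) = f.cL p := by
  unfold cL
  refine Finset.card_bij' (fun q _ => q - (n:ℤ)) (fun q _ => q + (n:ℤ)) ?_ ?_ ?_ ?_
  · intro q hq
    simp only [Finset.mem_filter, Finset.mem_Ioo] at hq ⊢
    have h1 : f.toFun (q - n + n) = f.toFun (q - n) + n := f.periodic _
    have h2 : f.toFun (p + n) = f.toFun p + n := f.periodic _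
    rw [show q - (n:ℤ) + n = q by ring] at h1
    constructor
    · omega
    · rw [h2] at hq; omega
  · intro q hq
    simp only [Finset.mem_filter, Finset.mem_Ioo] at hq ⊢
    have h1 : f.toFun (q + n) = f.toFun q + n := f.periodic _
    have h2 : f.toFun (p + n) = f.toFun p + n := f.periodic _
    constructor
    · omega
    · rw [h1, h2]; omega
  · intro q _; ring
  · intro q _; ring

lemma cC_per (f : BoundedAffinePerm k n) (p : ℤ) : f.cC (p + n) = f.cC p := by
  unfold cC
  have h2 : f.toFun (p + n) = f.toFun p + n := f.periodic _
  refine Finset.card_bij' (fun q _ => q - (n:ℤ)) (fun q _ => q + (n:ℤ)) ?_ ?_ ?_ ?_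
  · intro q hq
    simp only [Finset.mem_filter, Finset.mem_Ioo] at hq ⊢
    have h1 : f.toFun (q - n + n) = f.toFun (q - n) + n := f.periodic _
    rw [show q - (n:ℤ) + n = q by ring] at h1
    rw [h2] at hq
    exact ⟨⟨by omega, by omega⟩, by omega⟩
  · intro q hq
    simp only [Finset.mem_filter, Finset.mem_Ioo] at hq ⊢
    have h1 : f.toFun (q + n) = f.toFun q + n := f.periodic _
    rw [h2, h1]
    exact ⟨⟨by omega, by omega⟩, by omega⟩
  · intro q _; ring
  · intro q _; ring

end BoundedAffinePerm

section WindowSum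

variable {n : ℕ}

lemma sum_window_step (h : ℤ → ℕ) (hper : ∀ p, h (p + n) = h p) (hn : 1 ≤ n) (m : ℤ) :
    ∑ p ∈ Finset.Icc m (m + n - 1), h p = ∑ p ∈ Finset.Icc (m+1) (m + n), h p := by
  have e1 : Finset.Icc m (m + (n:ℤ) - 1) = insert m (Finset.Icc (m+1) (m + n - 1)) := by
    ext q; simp only [Finset.mem_Icc, Finset.mem_insert]; omega
  have e2 : Finset.Icc (m+1) (m + (n:ℤ)) = insert (m + n) (Finset.Icc (m+1) (m + n - 1)) := by
    ext q; simp only [Finset.mem_Icc, Finset.mem_insert]; omega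
  rw [e1, e2, Finset.sum_insert (by simp only [Finset.mem_Icc]; omega),
    Finset.sum_insert (by simp only [Finset.mem_Icc]; omega)]
  rw [show m + (n:ℤ) = m + n by ring, hper m]

lemma sum_window (h : ℤ → ℕ) (hper : ∀ p, h (p + n) = h p) (hn : 1 ≤ n) (m : ℤ) :
    ∑ p ∈ Finset.Icc m (m + n - 1), h p = ∑ p ∈ Finset.Icc (1:ℤ) (n:ℤ), h p := by
  have key : ∀ j : ℕ, ∀ m : ℤ, ∑ p ∈ Finset.Icc m (m + n - 1), h p
      = ∑ p ∈ Finset.Icc (m + j) (m + j + n - 1), h p := by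
    intro j
    induction j with
    | zero => intro m; simp
    | succ j ih =>
      intro m
      rw [ih m, sum_window_step h hper hn]
      have e1 : m + (j:ℤ) + 1 = m + ((j+1 : ℕ) : ℤ) := by push_cast; ring
      have e2 : m + (j:ℤ) + (n:ℤ) = m + ((j+1:ℕ):ℤ) + (n:ℤ) - 1 := by push_cast; ring
      rw [e1, e2]
  rcases le_or_gt m 1 with hm | hm
  · have e : m + (((1 - m).toNat : ℕ) : ℤ) = 1 := by omega
    rw [key (1-m).toNat m, e]
    have e2 : (1:ℤ) + (n:ℤ) - 1 = (n:ℤ) := by omega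
    rw [e2]
  · have h2 := key (m-1).toNat 1
    have e : (1:ℤ) + (((m-1).toNat : ℕ) : ℤ) = m := by omega
    rw [e] at h2
    rw [← h2]
    have e2 : (1:ℤ) + (n:ℤ) - 1 = (n:ℤ) := by omega
    rw [e2]

end WindowSum

lemma card_filter_swap {s : Finset ℤ} {P Q : ℤ → Prop} [DecidablePred P] [DecidablePred Q]
    {u v : ℤ} (hs : u ∈ s ↔ v ∈ s)
    (hpq : ∀ q ∈ s, q ≠ u → q ≠ v → (Q q ↔ P q))
    (hu : Q u ↔ P v) (hv : Q v ↔ P u) :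
    (s.filter Q).card = (s.filter P).card := by
  classical
  set m : ℤ → ℤ := fun q => if q = u then v else if q = v then u else q with hm
  have hmm : ∀ q, m (m q) = q := by
    intro q
    by_cases h1 : q = u
    · by_cases h2 : v = u <;> simp [hm, h1, h2]
    · by_cases h2 : q = v
      · simp [hm, h1, h2]
      · simp [hm, h1, h2]
  have hmem : ∀ q, q ∈ s → m q ∈ s := by
    intro q hqs
    by_cases h1 : q = u
    · simpa [hm, h1] using hs.mp (h1 ▸ hqs)
    · by_cases h2 : q = v
      · subst h2
        rw [hm]
        simp only [if_neg h1, if_pos rfl]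
        exact hs.mpr hqs
      · simpa [hm, h1, h2] using hqs
  have hQP : ∀ q ∈ s, (Q q ↔ P (m q)) := by
    intro q hqs
    by_cases h1 : q = u
    · subst h1; simpa [hm] using hu
    · by_cases h2 : q = v
      · subst h2; simp only [hm, h1, if_false, if_true]; simpa using hv
      · simp only [hm, h1, h2, if_false]
        exact hpq q hqs h1 h2
  refine Finset.card_bij' (fun q _ => m q) (fun q _ => m q) ?_ ?_ ?_ ?_
  · intro q hq
    simp only [Finset.mem_filter] at hq ⊢
    exact ⟨hmem q hq.1, (hQP q hq.1).mp hq.2⟩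
  · intro q hq
    simp only [Finset.mem_filter] at hq ⊢
    refine ⟨hmem q hq.1, ?_⟩
    have := hQP (m q) (hmem q hq.1)
    rw [hmm q] at this
    exact this.mpr hq.2
  · intro q _; exact hmm q
  · intro q _; exact hmm q

namespace BoundedAffinePerm

variable {k n : ℕ}

lemma length_eq (f : BoundedAffinePerm k n) : f.length = f.Lval := by
  have hper : ∀ m : ℤ, f.toFun (m + n) = f.toFun m + n := f.periodic
  unfold Lval length cL
  rw [← Finset.card_sigma]
  refine Finset.card_bij'
    (fun z _ => if f.toFun z.2 < f.toFun z.1 then (⟨z.1, z.2⟩ : (_ : ℤ) × ℤ) else ⟨z.2, z.1 + n⟩)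
    (fun w _ => if w.2 ≤ (n:ℤ) then (w.1, w.2) else (w.2 - n, w.1)) ?_ ?_ ?_ ?_
  · rintro ⟨z1, z2⟩ hz
    simp only [Finset.mem_filter, Finset.mem_product, Finset.mem_Icc] at hz
    obtain ⟨⟨⟨h11, h12⟩, h21, h22⟩, hlt, hcond⟩ := hz
    by_cases hc : f.toFun z2 < f.toFun z1
    · simp only [if_pos hc, Finset.mem_sigma, Finset.mem_filter, Finset.mem_Ioo, Finset.mem_Icc]
      exact ⟨⟨h11, h12⟩, ⟨hlt, by omega⟩, hc⟩
    · have hc2 : f.toFun z1 < f.toFun z2 - n := by tauto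
      simp only [if_neg hc, Finset.mem_sigma, Finset.mem_filter, Finset.mem_Ioo, Finset.mem_Icc]
      refine ⟨⟨h21, h22⟩, ⟨by omega, by omega⟩, ?_⟩
      rw [hper z1]; omega
  · rintro ⟨w1, w2⟩ hw
    simp only [Finset.mem_sigma, Finset.mem_filter, Finset.mem_Ioo, Finset.mem_Icc] at hw
    obtain ⟨⟨h11, h12⟩, ⟨ho1, ho2⟩, hlt⟩ := hw
    by_cases hc : w2 ≤ (n:ℤ)
    · simp only [if_pos hc, Finset.mem_filter, Finset.mem_product, Finset.mem_Icc]
      exact ⟨⟨⟨h11, h12⟩, by omega, hc⟩, ho1, Or.inl hlt⟩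
    · simp only [if_neg hc, Finset.mem_filter, Finset.mem_product, Finset.mem_Icc]
      refine ⟨⟨⟨by omega, by omega⟩, h11, h12⟩, by omega, Or.inr ?_⟩
      have := hper (w2 - n)
      rw [show w2 - (n:ℤ) + n = w2 by ring] at this
      omega
  · rintro ⟨z1, z2⟩ hz
    simp only [Finset.mem_filter, Finset.mem_product, Finset.mem_Icc] at hz
    obtain ⟨⟨⟨h11, h12⟩, h21, h22⟩, hlt, hcond⟩ := hz
    by_cases hc : f.toFun z2 < f.toFun z1
    · simp only [if_pos hc]
      rw [if_pos (by omega : z2 ≤ (n:ℤ))]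
    · simp only [if_neg hc]
      rw [if_neg (by omega : ¬ (z1 + (n:ℤ) ≤ n))]
      simp
  · rintro ⟨w1, w2⟩ hw
    simp only [Finset.mem_sigma, Finset.mem_filter, Finset.mem_Ioo, Finset.mem_Icc] at hw
    obtain ⟨⟨h11, h12⟩, ⟨ho1, ho2⟩, hlt⟩ := hw
    by_cases hc : w2 ≤ (n:ℤ)
    · simp only [if_pos hc]
      rw [if_pos hlt]
    · simp only [if_neg hc]
      have hv : f.toFun (w2 - n) = f.toFun w2 - n := by
        have := hper (w2 - n)
        rw [show w2 - (n:ℤ) + n = w2 by ring] at this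
        omega
      rw [if_neg (by rw [hv]; omega : ¬ (f.toFun w1 < f.toFun (w2 - n)))]
      simp

def cF (f : BoundedAffinePerm k n) (p : ℤ) : ℕ := if f.toFun p = p then 1 else 0

lemma fix_eq_sum (f : BoundedAffinePerm k n) :
    f.fixCount = ∑ p ∈ Finset.Icc (1:ℤ) (n:ℤ), f.cF p := by
  unfold fixCount cF
  exact Finset.card_filter _ _

lemma cF_per (f : BoundedAffinePerm k n) (p : ℤ) : f.cF (p + n) = f.cF p := by
  have h : (f.toFun (p + n) = p + n) ↔ (f.toFun p = p) := by
    rw [f.periodic p]; constructor <;> intro h <;> omega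
  unfold cF
  rw [if_congr h rfl rfl]

lemma Lval_window (f : BoundedAffinePerm k n) (hn : 1 ≤ n) (m : ℤ) :
    f.Lval = ∑ p ∈ Finset.Icc m (m + n - 1), f.cL p :=
  (sum_window f.cL f.cL_per hn m).symm

lemma crossings_window (f : BoundedAffinePerm k n) (hn : 1 ≤ n) (m : ℤ) :
    f.crossings = ∑ p ∈ Finset.Icc m (m + n - 1), f.cC p := by
  rw [f.crossings_eq_sum]
  exact (sum_window f.cC f.cC_per hn m).symm

lemma fixCount_window (f : BoundedAffinePerm k n) (hn : 1 ≤ n) (m : ℤ) :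
    f.fixCount = ∑ p ∈ Finset.Icc m (m + n - 1), f.cF p := by
  rw [f.fix_eq_sum]
  exact (sum_window f.cF f.cF_per hn m).symm

end BoundedAffinePerm

section MoreHelpers

variable {n : ℕ}

lemma emod_ne_of_between2 {a q : ℤ} (h0 : a < q) (h2 : q < a + 2*(n:ℤ))
    (hne : q ≠ a + (n:ℤ)) : q % (n:ℤ) ≠ a % (n:ℤ) := by
  intro h
  have hd : (n:ℤ) ∣ (q - a) := Int.dvd_of_emod_eq_zero
    (Int.emod_eq_emod_iff_emod_sub_eq_zero.mp h)
  rcases lt_trichotomy q (a + (n:ℤ)) with h' | h' | h'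
  · have := Int.le_of_dvd (by omega) hd
    omega
  · exact hne h'
  · have hd2 : (n:ℤ) ∣ (q - a - n) := by
      have h3 : q - a - (n:ℤ) = (q - a) - n := by ring
      rw [h3]
      exact dvd_sub hd dvd_rfl
    have := Int.le_of_dvd (by omega) hd2
    omega

lemma emod_ne_wide {a q : ℤ} (h1 : a - (n:ℤ) < q) (h2 : q < a + 2*(n:ℤ))
    (h3 : q ≠ a) (h4 : q ≠ a + (n:ℤ)) : q % (n:ℤ) ≠ a % (n:ℤ) := by
  intro h
  have hd : (n:ℤ) ∣ (q - a) := Int.dvd_of_emod_eq_zero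
    (Int.emod_eq_emod_iff_emod_sub_eq_zero.mp h)
  rcases lt_trichotomy (q - a) 0 with h' | h' | h'
  · have := Int.le_of_dvd (by omega) (dvd_neg.mpr hd)
    omega
  · omega
  · have hn' : (n:ℤ) ≤ q - a := Int.le_of_dvd (by omega) hd
    have hd2 : (n:ℤ) ∣ (q - a - n) := by
      have h5 : q - a - (n:ℤ) = (q - a) - n := by ring
      rw [h5]
      exact dvd_sub hd dvd_rfl
    have := Int.le_of_dvd (by omega) hd2
    omega

lemma eq_of_emod_eq {q r : ℤ} (h : q % (n:ℤ) = r % (n:ℤ)) (h1 : -(n:ℤ) < q - r)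
    (h2 : q - r < n) : q = r := by
  have hd : (n:ℤ) ∣ (q - r) := Int.dvd_of_emod_eq_zero
    (Int.emod_eq_emod_iff_emod_sub_eq_zero.mp h)
  rcases lt_trichotomy (q - r) 0 with h' | h' | h'
  · have := Int.le_of_dvd (by omega) (dvd_neg.mpr hd)
    omega
  · omega
  · have := Int.le_of_dvd (by omega) hd
    omega

lemma sigmaT_invol (hn : 2 ≤ n) (i m : ℤ) : sigmaT n i (sigmaT n i m) = m := by
  by_cases h1 : m % (n:ℤ) = i % (n:ℤ)
  · rw [sigmaT_lo h1, sigmaT_hi hn (by simpa using emod_congr_add (n := n) h1 1)]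
    ring
  · by_cases h2 : m % (n:ℤ) = (i+1) % (n:ℤ)
    · rw [sigmaT_hi hn h2, sigmaT_lo (by
        have := emod_congr_add (n := n) h2 (-1)
        rw [show m + -1 = m - 1 by ring, show i + 1 + -1 = i by ring] at this
        exact this)]
      ring
    · rw [sigmaT_self h1 h2, sigmaT_self h1 h2]

lemma sum_two_special (h1 h2 : ℤ → ℕ) {W : Finset ℤ} {u v : ℤ} (hu : u ∈ W) (hv : v ∈ W)
    (huv : u ≠ v) (hrest : ∀ p ∈ W, p ≠ u → p ≠ v → h1 p = h2 p) :
    ∑ p ∈ W, h1 p + (h2 u + h2 v) = ∑ p ∈ W, h2 p + (h1 u + h1 v) := by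
  classical
  have hv' : v ∈ W.erase u := Finset.mem_erase.mpr ⟨fun h => huv h.symm, hv⟩
  have e1 : ∑ p ∈ W, h1 p = h1 u + (h1 v + ∑ p ∈ (W.erase u).erase v, h1 p) := by
    rw [Finset.add_sum_erase _ h1 hv', Finset.add_sum_erase _ h1 hu]
  have e2 : ∑ p ∈ W, h2 p = h2 u + (h2 v + ∑ p ∈ (W.erase u).erase v, h2 p) := by
    rw [Finset.add_sum_erase _ h2 hv', Finset.add_sum_erase _ h2 hu]
  have e3 : ∑ p ∈ (W.erase u).erase v, h1 p = ∑ p ∈ (W.erase u).erase v, h2 p := by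
    refine Finset.sum_congr rfl ?_
    intro p hp
    have h1p := Finset.mem_erase.mp hp
    have h2p := Finset.mem_erase.mp h1p.2
    exact hrest p h2p.2 h2p.1 h1p.1
  omega

end MoreHelpers

namespace BoundedAffinePerm

variable {k n : ℕ}

lemma length_eq_zero (hn : n ≤ 1) (f : BoundedAffinePerm k n) : f.length = 0 := by
  unfold length
  rw [Finset.card_eq_zero]
  ext z
  simp only [Finset.mem_filter, Finset.mem_product, Finset.mem_Icc, Finset.notMem_empty,
    iff_false, not_and]
  rintro ⟨⟨h11, h12⟩, h21, h22⟩ hlt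
  exfalso
  have : (n:ℤ) ≤ 1 := by exact_mod_cast Nat.cast_le.mpr hn
  omega

theorem coreR (hn : 2 ≤ n) (f g : BoundedAffinePerm k n) (a : ℤ)
    (hg : ∀ m, g.toFun m = f.toFun (sigmaT n a m))
    (hAB : f.toFun a < f.toFun (a + 1)) :
    g.length = f.length + 1 ∧
      ((g.crossings = f.crossings ∧ g.fixCount = f.fixCount + 1) ∨
       (g.crossings + 1 = f.crossings ∧ g.fixCount = f.fixCount)) := by
  have hn1 : 1 ≤ n := by omega
  have hsa : sigmaT n a a = a + 1 := sigmaT_lo rfl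
  have hsb : sigmaT n a (a+1) = a := by rw [sigmaT_hi hn rfl]; ring
  have hga : g.toFun a = f.toFun (a+1) := by rw [hg a, hsa]
  have hgb : g.toFun (a+1) = f.toFun a := by rw [hg (a+1), hsb]
  have hA1 : a + 1 ≤ f.toFun a := by have := g.le_apply (a+1); rw [hgb] at this; exact this
  have hA2 : f.toFun a ≤ a + n := f.apply_le a
  have hB1 : a + 1 ≤ f.toFun (a+1) := f.le_apply (a+1)
  have hB2 : f.toFun (a+1) ≤ a + n := by have := g.apply_le a; rw [hga] at this; omega
  have hgf : ∀ q : ℤ, a + 1 < q → q < a + 2*(n:ℤ) → q ≠ a + n → q ≠ a + n + 1 →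
      g.toFun q = f.toFun q := by
    intro q h1 h2 h3 h4
    rw [hg q, sigmaT_self (emod_ne_of_between2 (by omega) (by omega) h3)
      (emod_ne_of_between2 (a := a + 1) (by omega) (by omega) (by omega))]
  have hfa_n : f.toFun (a + (n:ℤ)) = f.toFun a + n := f.periodic a
  have hfb_n : f.toFun (a + (n:ℤ) + 1) = f.toFun (a+1) + n := by
    rw [show a + (n:ℤ) + 1 = (a + 1) + n by ring]; exact f.periodic (a+1)
  have hga_n : g.toFun (a + (n:ℤ)) = f.toFun (a+1) + n := by rw [g.periodic a, hga]
  have hgb_n : g.toFun (a + (n:ℤ) + 1) = f.toFun a + n := by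
    rw [show a + (n:ℤ) + 1 = (a+1) + n by ring, g.periodic (a+1), hgb]
  have haW : a ∈ Finset.Icc a (a + (n:ℤ) - 1) := by simp only [Finset.mem_Icc]; omega
  have hbW : a + 1 ∈ Finset.Icc a (a + (n:ℤ) - 1) := by simp only [Finset.mem_Icc]; omega
  -- length computations
  have h2L : g.cL (a+1) = f.cL a := by
    unfold cL
    congr 1
    ext q
    simp only [Finset.mem_filter, Finset.mem_Ioo]
    constructor
    · rintro ⟨⟨hq1, hq2⟩, hlt⟩
      rw [hgb] at hlt
      by_cases hq : q = a + (n:ℤ)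
      · subst hq; rw [hga_n] at hlt; omega
      · have hgfq := hgf q (by omega) (by omega) hq (by omega)
        rw [hgfq] at hlt
        exact ⟨⟨by omega, by omega⟩, hlt⟩
    · rintro ⟨⟨hq1, hq2⟩, hlt⟩
      by_cases hq : q = a + 1
      · subst hq; omega
      · have hgfq := hgf q (by omega) (by omega) (by omega) (by omega)
        rw [hgb, hgfq]
        exact ⟨⟨by omega, by omega⟩, hlt⟩
  have h1L : g.cL a = f.cL (a+1) + 1 := by
    unfold cL
    have hset : (Finset.Ioo a (a + (n:ℤ))).filter (fun q => g.toFun q < g.toFun a) =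
        insert (a+1) ((Finset.Ioo (a+1) (a+1+(n:ℤ))).filter
          (fun q => f.toFun q < f.toFun (a+1))) := by
      ext q
      simp only [Finset.mem_filter, Finset.mem_Ioo, Finset.mem_insert]
      constructor
      · rintro ⟨⟨hq1, hq2⟩, hlt⟩
        by_cases hq : q = a+1
        · left; exact hq
        · right
          have hgfq := hgf q (by omega) (by omega) (by omega) (by omega)
          rw [hga, hgfq] at hlt
          exact ⟨⟨by omega, by omega⟩, hlt⟩
      · rintro (hq | ⟨⟨hq1, hq2⟩, hlt⟩)
        · subst hq
          rw [hga, hgb]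
          exact ⟨⟨by omega, by omega⟩, hAB⟩
        · by_cases hq : q = a + (n:ℤ)
          · subst hq; rw [hfa_n] at hlt; omega
          · have hgfq := hgf q (by omega) (by omega) hq (by omega)
            rw [hga, hgfq]
            exact ⟨⟨by omega, by omega⟩, hlt⟩
    rw [hset, Finset.card_insert_of_notMem (by simp [Finset.mem_Ioo])]
  have hrestL : ∀ p ∈ Finset.Icc a (a + (n:ℤ) - 1), p ≠ a → p ≠ a + 1 →
      g.cL p = f.cL p := by
    intro p hp hpa hpb
    simp only [Finset.mem_Icc] at hp
    have hgp : g.toFun p = f.toFun p := hgf p (by omega) (by omega) (by omega) (by omega)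
    unfold cL
    simp only [hgp]
    refine card_filter_swap (u := a + (n:ℤ)) (v := a + (n:ℤ) + 1) ?_ ?_ ?_ ?_
    · simp only [Finset.mem_Ioo]; omega
    · intro q hq hqu hqv
      simp only [Finset.mem_Ioo] at hq
      rw [hgf q (by omega) (by omega) hqu hqv]
    · rw [hga_n, hfb_n]
    · rw [hgb_n, hfa_n]
  have hLsum : g.Lval = f.Lval + 1 := by
    rw [g.Lval_window hn1 a, f.Lval_window hn1 a]
    have := sum_two_special g.cL f.cL haW hbW (by omega) hrestL
    omega
  have hlen : g.length = f.length + 1 := by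
    rw [g.length_eq, f.length_eq, hLsum]
  -- crossings: general pieces
  have h1C : g.cC a = f.cC (a+1) := by
    unfold cC
    simp only [hga]
    congr 1
    ext q
    simp only [Finset.mem_filter, Finset.mem_Ioo]
    constructor
    · rintro ⟨⟨hq1, hq2⟩, hlt⟩
      by_cases hq : q = a+1
      · subst hq; rw [hgb] at hlt; omega
      · have hgfq := hgf q (by omega) (by omega) (by omega) (by omega)
        rw [hgfq] at hlt
        exact ⟨⟨by omega, hq2⟩, hlt⟩
    · rintro ⟨⟨hq1, hq2⟩, hlt⟩
      have hgfq := hgf q (by omega) (by omega) (by omega) (by omega)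
      rw [hgfq]
      exact ⟨⟨by omega, hq2⟩, hlt⟩
  have hrestC : ∀ p ∈ Finset.Icc a (a + (n:ℤ) - 1), p ≠ a → p ≠ a + 1 →
      g.cC p = f.cC p := by
    intro p hp hpa hpb
    simp only [Finset.mem_Icc] at hp
    have hgp : g.toFun p = f.toFun p := hgf p (by omega) (by omega) (by omega) (by omega)
    have hfple : f.toFun p ≤ p + n := f.apply_le p
    have hfpge : p ≤ f.toFun p := f.le_apply p
    unfold cC
    simp only [hgp]
    by_cases hfp : f.toFun p = a + (n:ℤ) + 1
    · have hA2' : a + 1 < f.toFun a := by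
        rcases eq_or_lt_of_le hA1 with hh | hh
        · exfalso
          have : f.toFun p = f.toFun (a + (n:ℤ)) := by rw [hfa_n, ← hh, hfp]; ring
          have := f.inj this
          omega
        · omega
      congr 1
      apply Finset.filter_congr
      intro q hq
      simp only [Finset.mem_Ioo] at hq
      by_cases hqu : q = a + (n:ℤ)
      · subst hqu
        rw [hga_n, hfa_n]
        constructor <;> intro <;> omega
      · by_cases hqv : q = a + (n:ℤ) + 1
        · exfalso; omega
        · rw [hgf q (by omega) (by omega) hqu hqv]
    · refine card_filter_swap (u := a+(n:ℤ)) (v := a+(n:ℤ)+1) ?_ ?_ ?_ ?_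
      · simp only [Finset.mem_Ioo]; omega
      · intro q hq hqu hqv
        simp only [Finset.mem_Ioo] at hq
        rw [hgf q (by omega) (by omega) hqu hqv]
      · rw [hga_n, hfb_n]
      · rw [hgb_n, hfa_n]
  have hrestF : ∀ p ∈ Finset.Icc a (a + (n:ℤ) - 1), p ≠ a → p ≠ a + 1 →
      g.cF p = f.cF p := by
    intro p hp hpa hpb
    simp only [Finset.mem_Icc] at hp
    unfold cF
    rw [hgf p (by omega) (by omega) (by omega) (by omega)]
  refine ⟨hlen, ?_⟩
  by_cases hA : f.toFun a = a + 1
  · -- fixed point creation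
    left
    have hBge : a + 2 ≤ f.toFun (a+1) := by omega
    have h2C : f.cC a = 0 := by
      unfold cC
      simp only [hA]
      rw [Finset.card_eq_zero]
      ext q
      simp only [Finset.mem_filter, Finset.mem_Ioo, Finset.notMem_empty, iff_false, not_and]
      rintro ⟨h1, h2⟩
      omega
    have h3C : g.cC (a+1) = 0 := by
      unfold cC
      simp only [hgb, hA]
      rw [Finset.Ioo_self]
      simp
    constructor
    · rw [g.crossings_window hn1 a, f.crossings_window hn1 a]
      have := sum_two_special g.cC f.cC haW hbW (by omega) hrestC
      omega
    · rw [g.fixCount_window hn1 a, f.fixCount_window hn1 a]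
      have hs := sum_two_special g.cF f.cF haW hbW (by omega) hrestF
      have e1 : g.cF a = 0 := by unfold cF; rw [if_neg (by rw [hga]; omega)]
      have e2 : f.cF a = 0 := by unfold cF; rw [if_neg (by omega)]
      have e3 : g.cF (a+1) = 1 := by unfold cF; rw [if_pos (by rw [hgb]; omega)]
      have e4 : f.cF (a+1) = 0 := by unfold cF; rw [if_neg (by omega)]
      omega
  · -- pinch
    right
    have hA' : a + 2 ≤ f.toFun a := by omega
    have h2C' : f.cC a = g.cC (a+1) + 1 := by
      unfold cC
      simp only [hgb]
      have hset : (Finset.Ioo a (f.toFun a)).filter (fun q => f.toFun a < f.toFun q) =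
          insert (a+1) ((Finset.Ioo (a+1) (f.toFun a)).filter
            (fun q => f.toFun a < g.toFun q)) := by
        ext q
        simp only [Finset.mem_filter, Finset.mem_Ioo, Finset.mem_insert]
        constructor
        · rintro ⟨⟨hq1, hq2⟩, hlt⟩
          by_cases hq : q = a+1
          · left; exact hq
          · right
            have hgfq := hgf q (by omega) (by omega) (by omega) (by omega)
            rw [hgfq]
            exact ⟨⟨by omega, hq2⟩, hlt⟩
        · rintro (hq | ⟨⟨hq1, hq2⟩, hlt⟩)
          · subst hq
            exact ⟨⟨by omega, by omega⟩, hAB⟩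
          · have hgfq := hgf q (by omega) (by omega) (by omega) (by omega)
            rw [hgfq] at hlt
            exact ⟨⟨by omega, hq2⟩, hlt⟩
      rw [hset, Finset.card_insert_of_notMem (by simp [Finset.mem_Ioo])]
    constructor
    · rw [g.crossings_window hn1 a, f.crossings_window hn1 a]
      have := sum_two_special g.cC f.cC haW hbW (by omega) hrestC
      omega
    · rw [g.fixCount_window hn1 a, f.fixCount_window hn1 a]
      have hs := sum_two_special g.cF f.cF haW hbW (by omega) hrestF
      have e1 : g.cF a = 0 := by unfold cF; rw [if_neg (by rw [hga]; omega)]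
      have e2 : f.cF a = 0 := by unfold cF; rw [if_neg (by omega)]
      have e3 : g.cF (a+1) = 0 := by unfold cF; rw [if_neg (by rw [hgb]; omega)]
      have e4 : f.cF (a+1) = 0 := by unfold cF; rw [if_neg (by omega)]
      omega

theorem coreL (hn : 2 ≤ n) (f g : BoundedAffinePerm k n) (a x y : ℤ)
    (hfx : f.toFun x = a) (hfy : f.toFun y = a + 1) (hxy : x < y)
    (hg : ∀ m, g.toFun m = sigmaT n a (f.toFun m)) :
    g.length = f.length + 1 ∧
      ((g.crossings = f.crossings ∧ g.fixCount = f.fixCount + 1) ∨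
       (g.crossings + 1 = f.crossings ∧ g.fixCount = f.fixCount)) := by
  have hn1 : 1 ≤ n := by omega
  have hn0 : 0 < n := by omega
  have hgx : g.toFun x = a + 1 := by rw [hg x, hfx, sigmaT_lo rfl]
  have hgy : g.toFun y = a := by rw [hg y, hfy, sigmaT_hi hn rfl]; ring
  have hx1 : x ≤ a := by have := f.le_apply x; rw [hfx] at this; exact this
  have hx2 : a + 1 ≤ x + n := by have := g.apply_le x; rw [hgx] at this; omega
  have hy1 : y ≤ a := by have := g.le_apply y; rw [hgy] at this; exact this
  have hy2 : a + 1 ≤ y + n := by have := f.apply_le y; rw [hfy] at this; omega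
  have hyx : y ≤ x + (n:ℤ) - 1 := by omega
  have hvalx : ∀ q : ℤ, f.toFun q % (n:ℤ) = a % (n:ℤ) → q % (n:ℤ) = x % (n:ℤ) := by
    intro q h
    exact f.emod_of_emod hn0 (by rw [hfx]; exact h)
  have hvaly : ∀ q : ℤ, f.toFun q % (n:ℤ) = (a+1) % (n:ℤ) → q % (n:ℤ) = y % (n:ℤ) := by
    intro q h
    exact f.emod_of_emod hn0 (by rw [hfy]; exact h)
  have hgfq : ∀ q : ℤ, f.toFun q % (n:ℤ) ≠ a % (n:ℤ) →
      f.toFun q % (n:ℤ) ≠ (a+1) % (n:ℤ) → g.toFun q = f.toFun q := by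
    intro q h1 h2
    rw [hg q, sigmaT_self h1 h2]
  have hgfL : ∀ q : ℤ, x - (n:ℤ) < q → q < x + 2*(n:ℤ) → q ≠ x → q ≠ x + n →
      y - (n:ℤ) < q → q < y + 2*(n:ℤ) → q ≠ y → q ≠ y + n → g.toFun q = f.toFun q := by
    intro q c1 c2 c3 c4 c5 c6 c7 c8
    refine hgfq q (fun h => ?_) (fun h => ?_)
    · exact emod_ne_wide c1 c2 c3 c4 (hvalx q h)
    · exact emod_ne_wide c5 c6 c7 c8 (hvaly q h)
  have hfnex : ∀ q : ℤ, q ≠ x → f.toFun q ≠ a := by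
    intro q hq h
    exact hq (f.inj (by rw [hfx]; exact h))
  have hfney : ∀ q : ℤ, q ≠ y → f.toFun q ≠ a + 1 := by
    intro q hq h
    exact hq (f.inj (by rw [hfy]; exact h))
  have hfxn : f.toFun (x + (n:ℤ)) = a + n := by rw [f.periodic x, hfx]
  have hgxn : g.toFun (x + (n:ℤ)) = a + 1 + n := by rw [g.periodic x, hgx]
  have hxW : x ∈ Finset.Icc x (x + (n:ℤ) - 1) := by simp only [Finset.mem_Icc]; omega
  have hyW : y ∈ Finset.Icc x (x + (n:ℤ) - 1) := by simp only [Finset.mem_Icc]; omega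
  -- length
  have hxL : g.cL x = f.cL x + 1 := by
    unfold cL
    simp only [hgx, hfx]
    have hset : (Finset.Ioo x (x + (n:ℤ))).filter (fun q => g.toFun q < a + 1) =
        insert y ((Finset.Ioo x (x + (n:ℤ))).filter (fun q => f.toFun q < a)) := by
      ext q
      simp only [Finset.mem_filter, Finset.mem_Ioo, Finset.mem_insert]
      constructor
      · rintro ⟨⟨hq1, hq2⟩, hlt⟩
        by_cases hq : q = y
        · left; exact hq
        · right
          rw [hgfL q (by omega) (by omega) (by omega) (by omega)
            (by omega) (by omega) hq (by omega)] at hlt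
          have := hfnex q (by omega)
          exact ⟨⟨hq1, hq2⟩, by omega⟩
      · rintro (hq | ⟨⟨hq1, hq2⟩, hlt⟩)
        · subst hq
          rw [hgy]
          exact ⟨⟨by omega, by omega⟩, by omega⟩
        · have hq : q ≠ y := by
            intro h; subst h; rw [hfy] at hlt; omega
          rw [hgfL q (by omega) (by omega) (by omega) (by omega)
            (by omega) (by omega) hq (by omega)]
          exact ⟨⟨hq1, hq2⟩, by omega⟩
    rw [hset, Finset.card_insert_of_notMem (by
      simp only [Finset.mem_filter, Finset.mem_Ioo, hfy]
      omega)]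
  have hyL : g.cL y = f.cL y := by
    unfold cL
    simp only [hgy, hfy]
    congr 1
    ext q
    simp only [Finset.mem_filter, Finset.mem_Ioo]
    constructor
    · rintro ⟨⟨hq1, hq2⟩, hlt⟩
      by_cases hq : q = x + (n:ℤ)
      · subst hq; rw [hgxn] at hlt; omega
      · rw [hgfL q (by omega) (by omega) (by omega) hq
          (by omega) (by omega) (by omega) (by omega)] at hlt
        exact ⟨⟨hq1, hq2⟩, by omega⟩
    · rintro ⟨⟨hq1, hq2⟩, hlt⟩
      by_cases hq : q = x + (n:ℤ)
      · subst hq; rw [hfxn] at hlt; omega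
      · rw [hgfL q (by omega) (by omega) (by omega) hq
          (by omega) (by omega) (by omega) (by omega)]
        have := hfnex q (by omega)
        exact ⟨⟨hq1, hq2⟩, by omega⟩
  have hrestL : ∀ p ∈ Finset.Icc x (x + (n:ℤ) - 1), p ≠ x → p ≠ y →
      g.cL p = f.cL p := by
    intro p hp hpx hpy
    simp only [Finset.mem_Icc] at hp
    have hgp : g.toFun p = f.toFun p := hgfL p (by omega) (by omega) hpx (by omega)
      (by omega) (by omega) hpy (by omega)
    unfold cL
    simp only [hgp]
    congr 1
    apply Finset.filter_congr
    intro q hq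
    simp only [Finset.mem_Ioo] at hq
    by_cases hq1 : f.toFun q % (n:ℤ) = a % (n:ℤ)
    · rw [hg q, sigmaT_lo hq1]
      have hne : f.toFun p ≠ f.toFun q + 1 := by
        intro h
        have h2 : f.toFun p % (n:ℤ) = (a+1) % (n:ℤ) := by
          rw [h]; exact emod_congr_add hq1 1
        have h3 : p % (n:ℤ) = y % (n:ℤ) := hvaly p h2
        have : p = y := eq_of_emod_eq h3 (by omega) (by omega)
        exact hpy this
      constructor <;> intro <;> omega
    · by_cases hq2 : f.toFun q % (n:ℤ) = (a+1) % (n:ℤ)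
      · rw [hg q, sigmaT_hi hn hq2]
        have hne : f.toFun p ≠ f.toFun q := by
          intro h
          have := f.inj h
          omega
        constructor <;> intro <;> omega
      · rw [hgfq q hq1 hq2]
  have hLsum : g.Lval = f.Lval + 1 := by
    rw [g.Lval_window hn1 x, f.Lval_window hn1 x]
    have := sum_two_special g.cL f.cL hxW hyW (by omega) hrestL
    omega
  have hlen : g.length = f.length + 1 := by
    rw [g.length_eq, f.length_eq, hLsum]
  -- crossings rest
  have hrestC : ∀ p ∈ Finset.Icc x (x + (n:ℤ) - 1), p ≠ x → p ≠ y →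
      g.cC p = f.cC p := by
    intro p hp hpx hpy
    simp only [Finset.mem_Icc] at hp
    have hgp : g.toFun p = f.toFun p := hgfL p (by omega) (by omega) hpx (by omega)
      (by omega) (by omega) hpy (by omega)
    unfold cC
    simp only [hgp]
    congr 1
    apply Finset.filter_congr
    intro q hq
    simp only [Finset.mem_Ioo] at hq
    by_cases hq1 : f.toFun q % (n:ℤ) = a % (n:ℤ)
    · rw [hg q, sigmaT_lo hq1]
      have hne : f.toFun p ≠ f.toFun q := by
        intro h
        have := f.inj h
        omega
      constructor <;> intro <;> omega
    · by_cases hq2 : f.toFun q % (n:ℤ) = (a+1) % (n:ℤ)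
      · rw [hg q, sigmaT_hi hn hq2]
        have hne : f.toFun p ≠ f.toFun q - 1 := by
          intro h
          have h2 : f.toFun p % (n:ℤ) = a % (n:ℤ) := by
            rw [h]
            have := emod_congr_add hq2 (-1)
            rw [show f.toFun q + (-1) = f.toFun q - 1 by ring,
              show a + 1 + (-1) = a by ring] at this
            exact this
          have h3 : p % (n:ℤ) = x % (n:ℤ) := hvalx p h2
          have : p = x := eq_of_emod_eq h3 (by omega) (by omega)
          exact hpx this
        constructor <;> intro <;> omega
      · rw [hgfq q hq1 hq2]
  have hrestF : ∀ p ∈ Finset.Icc x (x + (n:ℤ) - 1), p ≠ x → p ≠ y →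
      g.cF p = f.cF p := by
    intro p hp hpx hpy
    simp only [Finset.mem_Icc] at hp
    have hgp : g.toFun p = f.toFun p := hgfL p (by omega) (by omega) hpx (by omega)
      (by omega) (by omega) hpy (by omega)
    unfold cF
    rw [hgp]
  refine ⟨hlen, ?_⟩
  by_cases hya : y = a
  · -- fixed point creation
    left
    subst hya
    have hxC : g.cC x = f.cC x := by
      unfold cC
      simp only [hgx, hfx]
      have hset : (Finset.Ioo x (y + 1)).filter (fun q => y + 1 < g.toFun q) =
          (Finset.Ioo x y).filter (fun q => y < f.toFun q) := by
        ext q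
        simp only [Finset.mem_filter, Finset.mem_Ioo]
        constructor
        · rintro ⟨⟨hq1, hq2⟩, hlt⟩
          have hq : q ≠ y := by
            intro h; subst h; rw [hgy] at hlt; omega
          rw [hgfL q (by omega) (by omega) (by omega) (by omega)
            (by omega) (by omega) hq (by omega)] at hlt
          exact ⟨⟨hq1, by omega⟩, by omega⟩
        · rintro ⟨⟨hq1, hq2⟩, hlt⟩
          have := hfney q (by omega)
          rw [hgfL q (by omega) (by omega) (by omega) (by omega)
            (by omega) (by omega) (by omega) (by omega)]
          exact ⟨⟨hq1, by omega⟩, by omega⟩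
      rw [hset]
    have hyC : g.cC y = f.cC y := by
      unfold cC
      simp only [hgy, hfy]
      rw [Finset.Ioo_self]
      have : Finset.Ioo y (y + 1) = (∅ : Finset ℤ) := by
        ext q
        simp only [Finset.mem_Ioo, Finset.notMem_empty, iff_false, not_and]
        omega
      rw [this]
      simp
    constructor
    · rw [g.crossings_window hn1 x, f.crossings_window hn1 x]
      have := sum_two_special g.cC f.cC hxW hyW (by omega) hrestC
      omega
    · rw [g.fixCount_window hn1 x, f.fixCount_window hn1 x]
      have hs := sum_two_special g.cF f.cF hxW hyW (by omega) hrestF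
      have e1 : g.cF x = 0 := by unfold cF; rw [if_neg (by rw [hgx]; omega)]
      have e2 : f.cF x = 0 := by unfold cF; rw [if_neg (by rw [hfx]; omega)]
      have e3 : g.cF y = 1 := by unfold cF; rw [if_pos (by rw [hgy])]
      have e4 : f.cF y = 0 := by unfold cF; rw [if_neg (by rw [hfy]; omega)]
      omega
  · -- pinch
    right
    have hya' : y < a := by omega
    have hfa1 : f.toFun a ≠ a := hfnex a (by omega)
    have hfa2 : f.toFun a ≠ a + 1 := hfney a (by omega)
    have hfa3 : a ≤ f.toFun a := f.le_apply a
    have hfa : a + 2 ≤ f.toFun a := by omega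
    have hga' : g.toFun a = f.toFun a := hgfL a (by omega) (by omega) (by omega) (by omega)
      (by omega) (by omega) (by omega) (by omega)
    have hxC' : g.cC x = f.cC x := by
      unfold cC
      simp only [hgx, hfx]
      have hIoo : Finset.Ioo x (a+1) = insert a (Finset.Ioo x a) := by
        ext q
        simp only [Finset.mem_Ioo, Finset.mem_insert]
        omega
      rw [hIoo, Finset.filter_insert, if_pos (by rw [hga']; omega),
        Finset.card_insert_of_notMem (by
          simp only [Finset.mem_filter, Finset.mem_Ioo]
          omega)]
      have hset2 : (Finset.Ioo x a).filter (fun q => a < f.toFun q) =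
          insert y ((Finset.Ioo x a).filter (fun q => a + 1 < g.toFun q)) := by
        ext q
        simp only [Finset.mem_filter, Finset.mem_Ioo, Finset.mem_insert]
        constructor
        · rintro ⟨⟨hq1, hq2⟩, hlt⟩
          by_cases hq : q = y
          · left; exact hq
          · right
            have := hfney q hq
            rw [hgfL q (by omega) (by omega) (by omega) (by omega)
              (by omega) (by omega) hq (by omega)]
            exact ⟨⟨hq1, hq2⟩, by omega⟩
        · rintro (hq | ⟨⟨hq1, hq2⟩, hlt⟩)
          · subst hq
            rw [hfy]
            exact ⟨⟨by omega, by omega⟩, by omega⟩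
          · have hq : q ≠ y := by
              intro h; subst h; rw [hgy] at hlt; omega
            rw [hgfL q (by omega) (by omega) (by omega) (by omega)
              (by omega) (by omega) hq (by omega)] at hlt
            exact ⟨⟨hq1, hq2⟩, by omega⟩
      rw [hset2, Finset.card_insert_of_notMem (by
        simp only [Finset.mem_filter, Finset.mem_Ioo, hgy]
        omega)]
    have hyC' : f.cC y = g.cC y + 1 := by
      unfold cC
      simp only [hgy, hfy]
      have hIoo2 : Finset.Ioo y (a+1) = insert a (Finset.Ioo y a) := by
        ext q
        simp only [Finset.mem_Ioo, Finset.mem_insert]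
        omega
      rw [hIoo2, Finset.filter_insert, if_pos (by omega),
        Finset.card_insert_of_notMem (by
          simp only [Finset.mem_filter, Finset.mem_Ioo]
          omega)]
      have hset3 : (Finset.Ioo y a).filter (fun q => a + 1 < f.toFun q) =
          (Finset.Ioo y a).filter (fun q => a < g.toFun q) := by
        apply Finset.filter_congr
        intro q hq
        simp only [Finset.mem_Ioo] at hq
        have h1 := hfnex q (by omega)
        have h2 := hfney q (by omega)
        rw [hgfL q (by omega) (by omega) (by omega) (by omega)
          (by omega) (by omega) (by omega) (by omega)]
        constructor <;> intro <;> omega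
      rw [hset3]
    constructor
    · rw [g.crossings_window hn1 x, f.crossings_window hn1 x]
      have := sum_two_special g.cC f.cC hxW hyW (by omega) hrestC
      omega
    · rw [g.fixCount_window hn1 x, f.fixCount_window hn1 x]
      have hs := sum_two_special g.cF f.cF hxW hyW (by omega) hrestF
      have e1 : g.cF x = 0 := by unfold cF; rw [if_neg (by rw [hgx]; omega)]
      have e2 : f.cF x = 0 := by unfold cF; rw [if_neg (by rw [hfx]; omega)]
      have e3 : g.cF y = 0 := by unfold cF; rw [if_neg (by rw [hgy]; omega)]
      have e4 : f.cF y = 0 := by unfold cF; rw [if_neg (by rw [hfy]; omega)]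
      omega


end BoundedAffinePerm

theorem covers_step {k n : ℕ} {f g : BoundedAffinePerm k n} (h : f.Covers g) :
    g.length = f.length + 1 ∧
      ((g.crossings = f.crossings ∧ g.fixCount = f.fixCount + 1) ∨
       (g.crossings + 1 = f.crossings ∧ g.fixCount = f.fixCount)) := by
  obtain ⟨hl, i, hcase⟩ := h
  have hn : 2 ≤ n := by
    by_contra hn'
    have h1 : f.length = 0 := BoundedAffinePerm.length_eq_zero (by omega) f
    have h2 : g.length = 0 := BoundedAffinePerm.length_eq_zero (by omega) g
    omega
  rcases hcase with hleft | hright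
  · -- g = σ ∘ f
    have hgm : ∀ m, g.toFun m = sigmaT n i (f.toFun m) := fun m => congrFun hleft m
    obtain ⟨x, hx⟩ := f.bijective.surjective i
    obtain ⟨y, hy⟩ := f.bijective.surjective (i+1)
    rcases lt_trichotomy x y with hxy | heq | hyx
    · exact BoundedAffinePerm.coreL hn f g i x y hx hy hxy hgm
    · exfalso; subst heq; rw [hx] at hy; omega
    · exfalso
      have hfm : ∀ m, f.toFun m = sigmaT n i (g.toFun m) := by
        intro m; rw [hgm m, sigmaT_invol hn]
      have hgy : g.toFun y = i := by rw [hgm y, hy, sigmaT_hi hn rfl]; ring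
      have hgx : g.toFun x = i + 1 := by rw [hgm x, hx, sigmaT_lo rfl]
      have := BoundedAffinePerm.coreL hn g f i y x hgy hgx hyx hfm
      omega
  · -- g = f ∘ σ
    have hgm : ∀ m, g.toFun m = f.toFun (sigmaT n i m) := fun m => congrFun hright m
    rcases lt_trichotomy (f.toFun i) (f.toFun (i+1)) with hAB | heq | hBA
    · exact BoundedAffinePerm.coreR hn f g i hgm hAB
    · exfalso
      have := f.inj heq
      omega
    · exfalso
      have hfm : ∀ m, f.toFun m = g.toFun (sigmaT n i m) := by
        intro m
        conv_lhs => rw [← sigmaT_invol hn i m]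
        rw [← hgm (sigmaT n i m)]
      have hga : g.toFun i = f.toFun (i+1) := by rw [hgm i, sigmaT_lo rfl]
      have hgb : g.toFun (i+1) = f.toFun i := by
        rw [hgm (i+1), sigmaT_hi hn rfl, show i + 1 - 1 = i by ring]
      have := BoundedAffinePerm.coreR hn g f i hfm (by rw [hga, hgb]; exact hBA)
      omega
theorem statement8 {k n : ℕ} (t : ℕ) (F : ℕ → BoundedAffinePerm k n)
    (hchain : ∀ s : ℕ, s < t → (F s).Covers (F (s + 1))) :
    (t : ℤ) = ((F t).length : ℤ) - ((F 0).length : ℤ) ∧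
    ((F 0).crossings : ℤ) - ((F t).crossings : ℤ) =
      (((F t).length : ℤ) - ((F 0).length : ℤ)) -
        (((F t).fixCount : ℤ) - ((F 0).fixCount : ℤ)) ∧
    ((((Finset.range t).filter
        (fun s => (F s).crossings = (F (s + 1)).crossings)).card : ℤ) =
      ((F t).fixCount : ℤ) - ((F 0).fixCount : ℤ)) := by
  induction t with
  | zero => simp
  | succ t ih =>
    obtain ⟨ih1, ih2, ih3⟩ := ih (fun s hs => hchain s (by omega))
    obtain ⟨hlen, hdico⟩ := covers_step (hchain t (by omega))
    have hfilter : ((Finset.range (t+1)).filter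
        (fun s => (F s).crossings = (F (s + 1)).crossings)).card =
        ((Finset.range t).filter
          (fun s => (F s).crossings = (F (s + 1)).crossings)).card +
          (if (F t).crossings = (F (t+1)).crossings then 1 else 0) := by
      rw [Finset.range_add_one, Finset.filter_insert]
      by_cases hc : (F t).crossings = (F (t+1)).crossings
      · rw [if_pos hc, if_pos hc,
          Finset.card_insert_of_notMem (by simp [Finset.mem_filter])]
      · rw [if_neg hc, if_neg hc]; omega
    rcases hdico with ⟨hcr, hfx⟩ | ⟨hcr, hfx⟩
    · have hc : (F t).crossings = (F (t+1)).crossings := hcr.symm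
      rw [hfilter, if_pos hc]
      push_cast
      constructor
      · omega
      constructor
      · omega
      · omega
    · have hc : ¬ ((F t).crossings = (F (t+1)).crossings) := by omega
      rw [hfilter, if_neg hc]
      push_cast
      refine ⟨by omega, by omega, by omega⟩
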